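/- KL divergence between instances (Lemma 1, with provable constants): Let v = (ρ,𝒮,𝒜,φ,N,θ) and v' = (ρ,𝒮,𝒜,φ,N,θ') be two instances differing only in the parameter vector, and let R_max = max_{k∈𝒮, i∈𝒜} max(|⟨φ(k,i),θ⟩|, |⟨φ(k,i),θ'⟩|). Then (n/8)·exp(−4R_max)·D̃(v,v') ≤ D_KL(P_v^{(n)} ‖ P_{v'}^{(n)}) ≤ 2n·exp(2R_max)·D̃(v,v'), where D̃(v,v') = Σ_{k,i,j} N_{k,i,j}·(⟨φ(k,i) − φ(k,j), θ − θ'⟩)². -/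

import Mathlib

open MeasureTheory ProbabilityTheory Real

namespace RLHF

/-- The logistic sigmoid function. -/
noncomputable def sigmoid (x : ℝ) : ℝ := Real.exp x / (1 + Real.exp x)

/-- Clipping to the interval `[1/(1+e^{2L}), e^{2L}/(1+e^{2L})]`. -/
noncomputable def clip (L x : ℝ) : ℝ :=
  max (1 / (1 + Real.exp (2 * L))) (min (Real.exp (2 * L) / (1 + Real.exp (2 * L))) x)

/-- The logit (log-odds) function. -/
noncomputable def logit (x : ℝ) : ℝ := Real.log (x / (1 - x))

/-- An offline RLHF instance: state distribution, feature map, parameter vector and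
sampling proportions. -/
structure Inst (S A d : ℕ) where
  ρ : Fin S → ℝ
  φ : Fin S → Fin A → EuclideanSpace ℝ (Fin d)
  θ : EuclideanSpace ℝ (Fin d)
  N : Fin S → Fin A → Fin A → ℝ
  ρ_pos : ∀ k, 0 < ρ k
  ρ_sum : ∑ k, ρ k = 1
  N_nonneg : ∀ k i j, 0 ≤ N k i j
  N_sum : ∑ k, ∑ i, ∑ j, N k i j = 1
  φ_ne : ∀ k i j, i ≠ j → φ k i ≠ φ k j

namespace Inst

variable {S A d : ℕ}

/-- The reward of action `i` in state `k`. -/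
noncomputable def r (v : Inst S A d) (k : Fin S) (i : Fin A) : ℝ :=
  @inner ℝ _ _ (v.φ k i) v.θ

/-- The span of the sampled feature differences. -/
def W (v : Inst S A d) : Submodule ℝ (EuclideanSpace ℝ (Fin d)) :=
  Submodule.span ℝ {x | ∃ k i j, 0 < v.N k i j ∧ x = v.φ k i - v.φ k j}

/-- Consistency of an instance. -/
def Consistent (v : Inst S A d) : Prop :=
  ∀ k i j, v.φ k i - v.φ k j ∈ v.W

/-- `istar` assigns to each state its unique best action. -/
def BestAction (v : Inst S A d) (istar : Fin S → Fin A) : Prop :=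
  ∀ k j, j ≠ istar k → v.r k j < v.r k (istar k)

/-- The suboptimality gap. -/
noncomputable def gap (v : Inst S A d) (istar : Fin S → Fin A) (k : Fin S) (i : Fin A) : ℝ :=
  v.r k (istar k) - v.r k i

/-- The objective value of a candidate weight vector. -/
noncomputable def cost (v : Inst S A d) (u : Fin S → Fin A → Fin A → ℝ) : ℝ :=
  ∑ k', ∑ i', ∑ j', if 0 < v.N k' i' j' then (u k' i' j') ^ 2 / v.N k' i' j' else 0

/-- Feasibility of a weight vector for the pair `(i,j)` in state `k`: it vanishes where
`N` vanishes and expresses `φ(k,i) − φ(k,j)` as a linear combination of sampled feature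
differences. -/
def Feasible (v : Inst S A d) (k : Fin S) (i j : Fin A)
    (u : Fin S → Fin A → Fin A → ℝ) : Prop :=
  (∀ k' i' j', v.N k' i' j' = 0 → u k' i' j' = 0) ∧
  v.φ k i - v.φ k j = ∑ k', ∑ i', ∑ j', u k' i' j' • (v.φ k' i' - v.φ k' j')

/-- `w` is a locally optimal weight vector for `(k,i,j)`. -/
def IsLOW (v : Inst S A d) (k : Fin S) (i j : Fin A)
    (w : Fin S → Fin A → Fin A → ℝ) : Prop :=
  v.Feasible k i j w ∧ ∀ u, v.Feasible k i j u → v.cost w ≤ v.cost u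

/-- `γ̃_{k,i}`-type quantity: weighted sum of absolute weights over `1/√N`. -/
noncomputable def gammaTilde (v : Inst S A d) (u : Fin S → Fin A → Fin A → ℝ) : ℝ :=
  ∑ k', ∑ i', ∑ j',
    if 0 < v.N k' i' j' then |u k' i' j'| / Real.sqrt (v.N k' i' j') else 0

/-- `γ^DP`-type quantity. -/
noncomputable def gammaDP (v : Inst S A d) (u : Fin S → Fin A → Fin A → ℝ) : ℝ :=
  ∑ k', ∑ i', ∑ j',
    if 0 < v.N k' i' j' then (u k' i' j' / v.N k' i' j') ^ 2 else 0

/-- `γ̃^DP`-type quantity. -/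
noncomputable def gammaTildeDP (v : Inst S A d) (u : Fin S → Fin A → Fin A → ℝ) : ℝ :=
  ∑ k', ∑ i', ∑ j',
    if 0 < v.N k' i' j' then |u k' i' j'| / v.N k' i' j' else 0

/-- The hardness parameter `H(v)`, where `w k i j` denotes the locally optimal weights
for the triple `(k,i,j)`. -/
noncomputable def H (v : Inst S A d) (istar : Fin S → Fin A)
    (w : Fin S → Fin A → Fin A → Fin S → Fin A → Fin A → ℝ) : ℝ :=
  sSup {x | ∃ k i, i ≠ istar k ∧
    x = v.cost (w k i (istar k)) / (v.gap istar k i) ^ 2}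

/-- The DP hardness parameter `H_DP^{(ε,δ)}(v)`. -/
noncomputable def HDP (v : Inst S A d) (istar : Fin S → Fin A)
    (w : Fin S → Fin A → Fin A → Fin S → Fin A → Fin A → ℝ) (ε δ : ℝ) : ℝ :=
  sSup {x | ∃ k i, i ≠ istar k ∧
    x = Real.sqrt (Real.log (1.25 / δ) * v.gammaDP (w k i (istar k))) /
        (Real.sqrt ε * v.gap istar k i)}

/-- The empirical success proportion `B_{k,i,j}` computed from counts `y`. -/
noncomputable def B (v : Inst S A d) (n : ℕ) (y : Fin S → Fin A → Fin A → ℕ)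
    (k : Fin S) (i j : Fin A) : ℝ :=
  if 0 < v.N k i j then (y k i j : ℝ) / (n * v.N k i j) else 0

/-- The RL-LOW relative reward estimate `r̂_{k,i,j}` computed from counts `y`. -/
noncomputable def rhat (v : Inst S A d) (L : ℝ) (n : ℕ)
    (w : Fin S → Fin A → Fin A → Fin S → Fin A → Fin A → ℝ)
    (y : Fin S → Fin A → Fin A → ℕ) (k : Fin S) (i j : Fin A) : ℝ :=
  if i = j then 0 else
    ∑ k', ∑ i', ∑ j', w k i j k' i' j' * logit (clip L (v.B n y k' i' j'))

/-- The DP-RL-LOW private relative reward estimate `r̃_{k,i,j}` computed from counts `y`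
and Gaussian noise realizations `z`. -/
noncomputable def rtilde (v : Inst S A d) (L : ℝ) (n : ℕ)
    (w : Fin S → Fin A → Fin A → Fin S → Fin A → Fin A → ℝ)
    (y : Fin S → Fin A → Fin A → ℕ) (z : Fin S → Fin A → Fin A → ℝ)
    (k : Fin S) (i j : Fin A) : ℝ :=
  if i = j then 0 else
    ∑ k', ∑ i', ∑ j', w k i j k' i' j' *
      logit (clip L
        (if 0 < v.N k' i' j' then
          (y k' i' j' : ℝ) / (n * v.N k' i' j') + z k' i' j' else 0))

/-- Simple regret of the action assignment `ihat` (using the best actions `istar`). -/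
noncomputable def regret (v : Inst S A d) (istar : Fin S → Fin A)
    (ihat : Fin S → Fin A) : ℝ :=
  ∑ k, v.ρ k * (v.r k (istar k) - v.r k (ihat k))

/-- Simple regret of the action assignment `ihat` (via suprema of rewards; this does not
require the best action to be unique). -/
noncomputable def regretSup (v : Inst S A d) (ihat : Fin S → Fin A) : ℝ :=
  ∑ k, v.ρ k * ((⨆ j, v.r k j) - v.r k (ihat k))

end Inst

/-- `Y` has the binomial law with `m` trials and success probability `p` under `P`. -/
def HasBinomialLaw {Ω : Type*} [MeasurableSpace Ω] (P : Measure Ω)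
    (Y : Ω → ℕ) (m : ℕ) (p : ℝ) : Prop :=
  ∀ t : ℕ, P {ω | Y ω = t} =
    ENNReal.ofReal ((m.choose t : ℝ) * p ^ t * (1 - p) ^ (m - t))

/-- The data model of offline RLHF with pairwise comparisons: for each triple `(k,i,j)`
with `N_{k,i,j} > 0`, the count `Y k i j` is binomial with `n·N_{k,i,j}` trials and
success probability `σ(r_{k,i} − r_{k,j})`, and these counts are independent. -/
def IsBTLSample {S A d : ℕ} (v : Inst S A d) (n : ℕ) {Ω : Type*} [MeasurableSpace Ω]
    (P : Measure Ω) (Y : Fin S → Fin A → Fin A → Ω → ℕ) : Prop :=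
  (∀ k i j, Measurable (Y k i j)) ∧
  (∀ k i j, 0 < v.N k i j →
    HasBinomialLaw P (Y k i j) ⌈(n : ℝ) * v.N k i j⌉₊
      (sigmoid (v.r k i - v.r k j))) ∧
  iIndepFun
    (fun (t : {t : Fin S × Fin A × Fin A // 0 < v.N t.1 t.2.1 t.2.2}) =>
      fun ω => (Y t.1.1 t.1.2.1 t.1.2.2 ω : ℝ)) P

/-- The data model of DP-RL-LOW: on top of the BTL counts, for each triple with
`N_{k,i,j} > 0` there is Gaussian noise `ξ k i j` of mean `0` and variance
`2·log(1.25/δ)/(ε·n·N_{k,i,j})²`, and all counts and noises are jointly independent. -/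
def IsDPSample {S A d : ℕ} (v : Inst S A d) (n : ℕ) (ε δ : ℝ) {Ω : Type*}
    [MeasurableSpace Ω] (P : Measure Ω)
    (Y : Fin S → Fin A → Fin A → Ω → ℕ) (ξ : Fin S → Fin A → Fin A → Ω → ℝ) : Prop :=
  (∀ k i j, Measurable (Y k i j)) ∧
  (∀ k i j, Measurable (ξ k i j)) ∧
  (∀ k i j, 0 < v.N k i j →
    HasBinomialLaw P (Y k i j) ⌈(n : ℝ) * v.N k i j⌉₊
      (sigmoid (v.r k i - v.r k j))) ∧
  (∀ k i j, 0 < v.N k i j →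
    P.map (ξ k i j) =
      gaussianReal 0
        (Real.toNNReal (2 * Real.log (1.25 / δ) / (ε * n * v.N k i j) ^ 2))) ∧
  iIndepFun
    (fun (t : {t : Fin S × Fin A × Fin A // 0 < v.N t.1 t.2.1 t.2.2} ⊕
              {t : Fin S × Fin A × Fin A // 0 < v.N t.1 t.2.1 t.2.2}) =>
      Sum.elim
        (fun t => fun ω => (Y t.1.1 t.1.2.1 t.1.2.2 ω : ℝ))
        (fun t => ξ t.1.1 t.1.2.1 t.1.2.2) t) P

end RLHF

open RLHF

/-- KL divergence between Bernoulli distributions with parameters `p` and `q`. -/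
noncomputable def bernKL (p q : ℝ) : ℝ :=
  p * Real.log (p / q) + (1 - p) * Real.log ((1 - p) / (1 - q))

/-- The approximation `D̃(v,v')` of the KL divergence between two instances differing
only in the parameter vector. -/
noncomputable def RLHF.Inst.Dtilde {S A d : ℕ} (v : Inst S A d)
    (θ' : EuclideanSpace ℝ (Fin d)) : ℝ :=
  ∑ k, ∑ i, ∑ j,
    v.N k i j * (@inner ℝ _ _ (v.φ k i - v.φ k j) (v.θ - θ')) ^ 2

section Aux

open Set

/-- softplus -/
noncomputable def sp (x : ℝ) : ℝ := Real.log (1 + Real.exp x)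

lemma one_add_exp_pos (x : ℝ) : (0:ℝ) < 1 + Real.exp x := by positivity

lemma sigmoid_pos (x : ℝ) : 0 < RLHF.sigmoid x :=
  div_pos (Real.exp_pos x) (one_add_exp_pos x)

lemma sigmoid_lt_one (x : ℝ) : RLHF.sigmoid x < 1 := by
  rw [RLHF.sigmoid, div_lt_one (one_add_exp_pos x)]; linarith [Real.exp_pos x]

lemma continuous_sp : Continuous sp :=
  (continuous_const.add Real.continuous_exp).log fun x => (one_add_exp_pos x).ne'

lemma hasDerivAt_sp (x : ℝ) : HasDerivAt sp (RLHF.sigmoid x) x := by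
  have h : HasDerivAt (fun t => 1 + Real.exp t) (Real.exp x) x :=
    (Real.hasDerivAt_exp x).const_add 1
  have h2 := h.log (one_add_exp_pos x).ne'
  rw [show sp = fun y => Real.log (1 + Real.exp y) from rfl]
  simpa [RLHF.sigmoid] using h2

lemma hasDerivAt_sigmoid (x : ℝ) :
    HasDerivAt RLHF.sigmoid (RLHF.sigmoid x * (1 - RLHF.sigmoid x)) x := by
  have h : HasDerivAt (fun t => Real.exp t / (1 + Real.exp t))
      ((Real.exp x * (1 + Real.exp x) - Real.exp x * Real.exp x) / (1 + Real.exp x) ^ 2) x :=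
    (Real.hasDerivAt_exp x).div ((Real.hasDerivAt_exp x).const_add 1) (one_add_exp_pos x).ne'
  have heq : (Real.exp x * (1 + Real.exp x) - Real.exp x * Real.exp x) / (1 + Real.exp x) ^ 2
      = RLHF.sigmoid x * (1 - RLHF.sigmoid x) := by
    have := (one_add_exp_pos x).ne'
    rw [RLHF.sigmoid]; field_simp
  rw [heq] at h
  exact h

lemma sigmoid_deriv_le (x : ℝ) : RLHF.sigmoid x * (1 - RLHF.sigmoid x) ≤ 1 / 4 := by
  nlinarith [sq_nonneg (2 * RLHF.sigmoid x - 1)]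

lemma one_sub_sigmoid (x : ℝ) : 1 - RLHF.sigmoid x = 1 / (1 + Real.exp x) := by
  have := (one_add_exp_pos x).ne'
  rw [RLHF.sigmoid]; field_simp; ring

lemma sigmoid_mul_one_sub (x : ℝ) :
    RLHF.sigmoid x * (1 - RLHF.sigmoid x) = Real.exp x / (1 + Real.exp x) ^ 2 := by
  rw [one_sub_sigmoid, RLHF.sigmoid, div_mul_div_comm, mul_one, sq]

lemma sigmoid_deriv_ge {c x : ℝ} (hx : |x| ≤ c) :
    Real.exp (-c) / 4 ≤ RLHF.sigmoid x * (1 - RLHF.sigmoid x) := by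
  obtain ⟨hx1, hx2⟩ := abs_le.mp hx
  have hEpos : 0 < Real.exp x := Real.exp_pos x
  have hkey : (1 + Real.exp x) ^ 2 ≤ 4 * Real.exp c * Real.exp x := by
    rcases le_total x 0 with h | h
    · have h1 : Real.exp x ≤ 1 := Real.exp_le_one_iff.mpr h
      have h2 : (1:ℝ) ≤ Real.exp c * Real.exp x := by
        rw [← Real.exp_add]
        exact Real.one_le_exp (by linarith)
      nlinarith
    · have h1 : (1:ℝ) ≤ Real.exp x := Real.one_le_exp h
      have h2 : Real.exp x ≤ Real.exp c := Real.exp_le_exp.mpr (by linarith)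
      nlinarith
  rw [sigmoid_mul_one_sub,
    div_le_div_iff₀ (by norm_num : (0:ℝ) < 4) (by positivity)]
  have hmul : Real.exp (-c) * Real.exp c = 1 := by
    rw [← Real.exp_add]; simp
  nlinarith [mul_le_mul_of_nonneg_left hkey (Real.exp_pos (-c)).le, Real.exp_pos (-c)]

lemma bernKL_sigmoid (a b : ℝ) :
    bernKL (RLHF.sigmoid a) (RLHF.sigmoid b) = sp b - sp a - RLHF.sigmoid a * (b - a) := by
  have hlog : ∀ x : ℝ, Real.log (RLHF.sigmoid x) = x - sp x := by
    intro x
    rw [RLHF.sigmoid, sp, Real.log_div (Real.exp_pos x).ne' (one_add_exp_pos x).ne', Real.log_exp]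
  have hlog1 : ∀ x : ℝ, Real.log (1 - RLHF.sigmoid x) = -sp x := by
    intro x
    rw [one_sub_sigmoid, sp, one_div, Real.log_inv]
  have h1 : Real.log (RLHF.sigmoid a / RLHF.sigmoid b) = (a - sp a) - (b - sp b) := by
    rw [Real.log_div (_root_.sigmoid_pos a).ne' (_root_.sigmoid_pos b).ne', hlog, hlog]
  have h2 : Real.log ((1 - RLHF.sigmoid a) / (1 - RLHF.sigmoid b)) = -sp a - -sp b := by
    rw [Real.log_div (by linarith [_root_.sigmoid_lt_one a]) (by linarith [_root_.sigmoid_lt_one b]),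
      hlog1, hlog1]
  rw [bernKL, h1, h2]; ring

lemma continuous_rlhfSigmoid : Continuous RLHF.sigmoid :=
  Real.continuous_exp.div (continuous_const.add Real.continuous_exp)
    fun x => (one_add_exp_pos x).ne'

lemma bregman_eq {a b : ℝ} (hab : a ≠ b) :
    ∃ ξ ∈ Set.Icc (min a b) (max a b),
      sp b - sp a - RLHF.sigmoid a * (b - a)
        = RLHF.sigmoid ξ * (1 - RLHF.sigmoid ξ) / 2 * (b - a) ^ 2 := by
  set f : ℝ → ℝ := fun t => sp t - sp a - RLHF.sigmoid a * (t - a) with hf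
  set f' : ℝ → ℝ := fun t => RLHF.sigmoid t - RLHF.sigmoid a with hf'
  set g : ℝ → ℝ := fun t => (t - a) ^ 2 with hg
  set g' : ℝ → ℝ := fun t => 2 * (t - a) with hg'
  have hfd : ∀ t : ℝ, HasDerivAt f (f' t) t := by
    intro t
    have := ((hasDerivAt_sp t).sub_const (sp a)).sub
      (((hasDerivAt_id t).sub_const a).const_mul (RLHF.sigmoid a))
    exact this.congr_deriv (by simp [hf'])
  have hgd : ∀ t : ℝ, HasDerivAt g (g' t) t := by
    intro t
    have := ((hasDerivAt_id t).sub_const a).pow 2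
    exact this.congr_deriv (by simp [hg', mul_comm])
  have hfc : Continuous f := by
    apply (continuous_sp.sub continuous_const).sub
    exact continuous_const.mul (continuous_id.sub continuous_const)
  have hgc : Continuous g := by
    apply Continuous.pow
    exact continuous_id.sub continuous_const
  have hfa : f a = 0 := by show sp a - sp a - RLHF.sigmoid a * (a - a) = 0; ring
  have hga : g a = 0 := by show (a - a) ^ 2 = 0; ring
  have hgb : g b = (b - a) ^ 2 := rfl
  have hfb0 : f b = sp b - sp a - RLHF.sigmoid a * (b - a) := rfl
  rcases lt_or_gt_of_ne hab with h | h
  · obtain ⟨c, hc, hcc⟩ := exists_ratio_hasDerivAt_eq_ratio_slope f f' h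
      hfc.continuousOn (fun x _ => hfd x) g g' hgc.continuousOn (fun x _ => hgd x)
    have hca : c - a ≠ 0 := sub_ne_zero.mpr (ne_of_gt hc.1)
    obtain ⟨ξ, hξ, hξξ⟩ := exists_hasDerivAt_eq_slope RLHF.sigmoid
      (fun t => RLHF.sigmoid t * (1 - RLHF.sigmoid t)) hc.1 continuous_rlhfSigmoid.continuousOn
      (fun x _ => hasDerivAt_sigmoid x)
    rw [eq_div_iff hca] at hξξ
    have hfc' : f' c = RLHF.sigmoid c - RLHF.sigmoid a := rfl
    have hgc' : g' c = 2 * (c - a) := rfl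
    rw [hfa, hga, hgb, hfc', hgc', ← hξξ] at hcc
    have hcancel : (b - a) ^ 2 * (RLHF.sigmoid ξ * (1 - RLHF.sigmoid ξ)) = f b * 2 :=
      mul_right_cancel₀ hca (by linear_combination hcc)
    refine ⟨ξ, ⟨by rw [min_eq_left h.le]; exact hξ.1.le,
      by rw [max_eq_right h.le]; exact (hξ.2.trans hc.2).le⟩, ?_⟩
    rw [← hfb0]
    linear_combination -hcancel / 2
  · obtain ⟨c, hc, hcc⟩ := exists_ratio_hasDerivAt_eq_ratio_slope f f' h
      hfc.continuousOn (fun x _ => hfd x) g g' hgc.continuousOn (fun x _ => hgd x)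
    have hca : c - a ≠ 0 := sub_ne_zero.mpr (ne_of_lt hc.2)
    have hac : a - c ≠ 0 := sub_ne_zero.mpr (ne_of_gt hc.2)
    obtain ⟨ξ, hξ, hξξ⟩ := exists_hasDerivAt_eq_slope RLHF.sigmoid
      (fun t => RLHF.sigmoid t * (1 - RLHF.sigmoid t)) hc.2 continuous_rlhfSigmoid.continuousOn
      (fun x _ => hasDerivAt_sigmoid x)
    rw [eq_div_iff hac] at hξξ
    have hslope : RLHF.sigmoid c - RLHF.sigmoid a = RLHF.sigmoid ξ * (1 - RLHF.sigmoid ξ) * (c - a) := by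
      linear_combination hξξ
    have hfc' : f' c = RLHF.sigmoid c - RLHF.sigmoid a := rfl
    have hgc' : g' c = 2 * (c - a) := rfl
    rw [hfa, hga, hgb, hfc', hgc', hslope] at hcc
    have hcancel : (b - a) ^ 2 * (RLHF.sigmoid ξ * (1 - RLHF.sigmoid ξ)) = f b * 2 :=
      mul_right_cancel₀ hca (by linear_combination -hcc)
    refine ⟨ξ, ⟨by rw [min_eq_right h.le]; exact (hc.1.trans hξ.1).le,
      by rw [max_eq_left h.le]; exact hξ.2.le⟩, ?_⟩
    rw [← hfb0]
    linear_combination -hcancel / 2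

lemma bregman_bound {c a b : ℝ} (ha : |a| ≤ c) (hb : |b| ≤ c) :
    Real.exp (-c) / 8 * (b - a) ^ 2 ≤ sp b - sp a - RLHF.sigmoid a * (b - a) ∧
      sp b - sp a - RLHF.sigmoid a * (b - a) ≤ 1 / 8 * (b - a) ^ 2 := by
  rcases eq_or_ne a b with rfl | hab
  · simp
  obtain ⟨ξ, hξmem, hξ⟩ := bregman_eq hab
  have hξc : |ξ| ≤ c := by
    obtain ⟨h1a, h2a⟩ := abs_le.mp ha
    obtain ⟨h1b, h2b⟩ := abs_le.mp hb
    exact abs_le.mpr ⟨le_trans (le_min h1a h1b) hξmem.1,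
      le_trans hξmem.2 (max_le h2a h2b)⟩
  have hlow := sigmoid_deriv_ge hξc
  have hup := sigmoid_deriv_le ξ
  have hsq : (0:ℝ) ≤ (b - a) ^ 2 := sq_nonneg _
  constructor
  · rw [hξ]; nlinarith
  · rw [hξ]; nlinarith

end Aux

/-- **Lemma 1 (KL divergence between instances, with provable constants).**
For instances `v, v'` differing only in the parameter vector, with
`R_max = max_{k,i} max(|⟨φ(k,i),θ⟩|, |⟨φ(k,i),θ'⟩|)`, the KL divergence between the
joint laws of the `n` labels (computed via the chain rule as
`n·Σ_{k,i,j} N_{k,i,j}·d_KL(σ(r_{k,i}−r_{k,j}), σ(r'_{k,i}−r'_{k,j}))`) satisfies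
`(n/8)·exp(−4R_max)·D̃(v,v') ≤ D_KL ≤ 2n·exp(2R_max)·D̃(v,v')`. -/
theorem kl_divergence_between_instances (S A d : ℕ) (n : ℕ)
    (v : Inst S A d) (θ' : EuclideanSpace ℝ (Fin d))
    (hdiv : ∀ k i j, ∃ m : ℕ, (m : ℝ) = n * v.N k i j) :
    let v' : Inst S A d := { v with θ := θ' }
    let Rmax : ℝ := ⨆ k, ⨆ i, max |v.r k i| |v'.r k i|
    let DKL : ℝ := n * ∑ k, ∑ i, ∑ j,
      v.N k i j * bernKL (RLHF.sigmoid (v.r k i - v.r k j)) (RLHF.sigmoid (v'.r k i - v'.r k j))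
    (n / 8 : ℝ) * Real.exp (-4 * Rmax) * v.Dtilde θ' ≤ DKL ∧
      DKL ≤ 2 * n * Real.exp (2 * Rmax) * v.Dtilde θ' := by
  intro v' Rmax DKL
  have hR0 : 0 ≤ Rmax :=
    Real.iSup_nonneg fun k => Real.iSup_nonneg fun i =>
      le_trans (abs_nonneg _) (le_max_left _ _)
  have hrbound : ∀ k i, |v.r k i| ≤ Rmax ∧ |v'.r k i| ≤ Rmax := by
    intro k i
    have h1 : max |v.r k i| |v'.r k i| ≤ ⨆ i', max |v.r k i'| |v'.r k i'| :=
      le_ciSup (f := fun i' => max |v.r k i'| |v'.r k i'|)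
        (Set.finite_range _).bddAbove i
    have h2 : (⨆ i', max |v.r k i'| |v'.r k i'|) ≤ Rmax :=
      le_ciSup (f := fun k' => ⨆ i', max |v.r k' i'| |v'.r k' i'|)
        (Set.finite_range _).bddAbove k
    exact ⟨le_trans (le_trans (le_max_left _ _) h1) h2,
      le_trans (le_trans (le_max_right _ _) h1) h2⟩
  have key : ∀ k i j,
      Real.exp (-(2 * Rmax)) / 8 *
          (@inner ℝ _ _ (v.φ k i - v.φ k j) (v.θ - θ')) ^ 2
        ≤ bernKL (RLHF.sigmoid (v.r k i - v.r k j)) (RLHF.sigmoid (v'.r k i - v'.r k j)) ∧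
      bernKL (RLHF.sigmoid (v.r k i - v.r k j)) (RLHF.sigmoid (v'.r k i - v'.r k j))
        ≤ 1 / 8 * (@inner ℝ _ _ (v.φ k i - v.φ k j) (v.θ - θ')) ^ 2 := by
    intro k i j
    set a := v.r k i - v.r k j with hadef
    set b := v'.r k i - v'.r k j with hbdef
    have ha : |a| ≤ 2 * Rmax := by
      obtain ⟨h1, h2⟩ := abs_le.mp (hrbound k i).1
      obtain ⟨h3, h4⟩ := abs_le.mp (hrbound k j).1
      rw [hadef, abs_le]
      exact ⟨by linarith, by linarith⟩
    have hb : |b| ≤ 2 * Rmax := by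
      obtain ⟨h1, h2⟩ := abs_le.mp (hrbound k i).2
      obtain ⟨h3, h4⟩ := abs_le.mp (hrbound k j).2
      rw [hbdef, abs_le]
      exact ⟨by linarith, by linarith⟩
    have hx : a - b = @inner ℝ _ _ (v.φ k i - v.φ k j) (v.θ - θ') := by
      have hvr : ∀ i', v'.r k i' = @inner ℝ _ _ (v.φ k i') θ' := fun i' => rfl
      simp only [hadef, hbdef, Inst.r, hvr, inner_sub_left, inner_sub_right]
      rfl
    have hsq : (b - a) ^ 2 = (@inner ℝ _ _ (v.φ k i - v.φ k j) (v.θ - θ')) ^ 2 := by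
      rw [← hx]; ring
    obtain ⟨hlo, hhi⟩ := bregman_bound ha hb
    rw [← hsq]
    rw [bernKL_sigmoid]
    exact ⟨hlo, hhi⟩
  constructor
  · have h1 : Real.exp (-4 * Rmax) / 8 * v.Dtilde θ'
        ≤ ∑ k, ∑ i, ∑ j, v.N k i j *
            bernKL (RLHF.sigmoid (v.r k i - v.r k j)) (RLHF.sigmoid (v'.r k i - v'.r k j)) := by
      rw [Inst.Dtilde, Finset.mul_sum]
      refine Finset.sum_le_sum fun k _ => ?_
      rw [Finset.mul_sum]
      refine Finset.sum_le_sum fun i _ => ?_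
      rw [Finset.mul_sum]
      refine Finset.sum_le_sum fun j _ => ?_
      have hN := v.N_nonneg k i j
      have hk := (key k i j).1
      have hcmp : Real.exp (-4 * Rmax) ≤ Real.exp (-(2 * Rmax)) :=
        Real.exp_le_exp.mpr (by linarith)
      have hsq : (0:ℝ) ≤ (@inner ℝ _ _ (v.φ k i - v.φ k j) (v.θ - θ')) ^ 2 := sq_nonneg _
      calc Real.exp (-4 * Rmax) / 8 *
            (v.N k i j * (@inner ℝ _ _ (v.φ k i - v.φ k j) (v.θ - θ')) ^ 2)
          = v.N k i j * (Real.exp (-4 * Rmax) / 8 *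
            (@inner ℝ _ _ (v.φ k i - v.φ k j) (v.θ - θ')) ^ 2) := by ring
        _ ≤ v.N k i j * (bernKL (RLHF.sigmoid (v.r k i - v.r k j))
            (RLHF.sigmoid (v'.r k i - v'.r k j))) := by
            refine mul_le_mul_of_nonneg_left (le_trans ?_ hk) hN
            exact mul_le_mul_of_nonneg_right (by linarith) hsq
    calc (n / 8 : ℝ) * Real.exp (-4 * Rmax) * v.Dtilde θ'
        = n * (Real.exp (-4 * Rmax) / 8 * v.Dtilde θ') := by ring
      _ ≤ DKL := mul_le_mul_of_nonneg_left h1 (Nat.cast_nonneg n)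
  · have h1 : (∑ k, ∑ i, ∑ j, v.N k i j *
          bernKL (RLHF.sigmoid (v.r k i - v.r k j)) (RLHF.sigmoid (v'.r k i - v'.r k j)))
        ≤ 2 * Real.exp (2 * Rmax) * v.Dtilde θ' := by
      rw [Inst.Dtilde, Finset.mul_sum]
      refine Finset.sum_le_sum fun k _ => ?_
      rw [Finset.mul_sum]
      refine Finset.sum_le_sum fun i _ => ?_
      rw [Finset.mul_sum]
      refine Finset.sum_le_sum fun j _ => ?_
      have hN := v.N_nonneg k i j
      have hk := (key k i j).2
      have hexp : (1:ℝ) ≤ Real.exp (2 * Rmax) := Real.one_le_exp (by linarith)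
      have hsq : (0:ℝ) ≤ (@inner ℝ _ _ (v.φ k i - v.φ k j) (v.θ - θ')) ^ 2 := sq_nonneg _
      calc v.N k i j * bernKL (RLHF.sigmoid (v.r k i - v.r k j))
            (RLHF.sigmoid (v'.r k i - v'.r k j))
          ≤ v.N k i j * (2 * Real.exp (2 * Rmax) *
            (@inner ℝ _ _ (v.φ k i - v.φ k j) (v.θ - θ')) ^ 2) := by
            refine mul_le_mul_of_nonneg_left (le_trans hk ?_) hN
            refine mul_le_mul_of_nonneg_right (by nlinarith) hsq
        _ = 2 * Real.exp (2 * Rmax) *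
            (v.N k i j * (@inner ℝ _ _ (v.φ k i - v.φ k j) (v.θ - θ')) ^ 2) := by ring
    calc DKL ≤ n * (2 * Real.exp (2 * Rmax) * v.Dtilde θ')
          := mul_le_mul_of_nonneg_left h1 (Nat.cast_nonneg n)
      _ = 2 * n * Real.exp (2 * Rmax) * v.Dtilde θ' := by ring
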